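/- arXiv:1105.3913 — 3 statements merged into one kernel-verified Lean document; each statement's English description precedes it below -/
import Mathlib

section
/- Let A ≥ 0, B ≥ 0 with either B ≥ 1, or 0 ≤ B < 1 and 27A ≥ (1-B)³. Then the function h(u) = (1-u)(A + Bu + u²)/u is monotone non-increasing on (0, ∞). -/
/-- If `B ≥ 1`, or `0 ≤ B < 1` and `27A ≥ (1-B)^3`, then
`h(u) = (1-u)(A+Bu+u²)/u` is monotone non-increasing on `(0,∞)`. -/
theorem stmt4 (A B : ℝ) (hA : 0 ≤ A) (hB : 0 ≤ B)
    (hcase : 1 ≤ B ∨ (B < 1 ∧ (1 - B) ^ 3 ≤ 27 * A))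
    (h : ℝ → ℝ) (hh : ∀ u, h u = (1 - u) * (A + B * u + u ^ 2) / u) :
    AntitoneOn h (Set.Ioi (0 : ℝ)) := by
  intro x hx y hy hxy
  simp only [Set.mem_Ioi] at hx hy
  rw [hh x, hh y, div_le_div_iff₀ hy hx]
  have key : (1 - B) * (x * y) ≤ A + x ^ 2 * y + x * y ^ 2 := by
    rcases hcase with hB1 | ⟨hB1, hAB⟩
    · nlinarith [mul_pos hx hy, mul_nonneg (mul_nonneg hx.le hx.le) hy.le,
        mul_nonneg (mul_nonneg hx.le hy.le) hy.le]
    · have hc : 0 ≤ 1 - B := by linarith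
      set c := 1 - B with hcdef
      rcases le_or_gt c (x + y) with hs | hs
      · nlinarith [mul_pos hx hy, pow_nonneg hc 3]
      · -- x + y < c; set z = c - x - y > 0, use xyz ≤ ((x+y+z)/3)^3
        have hz : 0 < c - x - y := by linarith
        nlinarith [mul_nonneg (mul_nonneg hz.le hz.le) (sq_nonneg (x - y)),
          mul_nonneg (mul_nonneg hx.le hy.le) (sq_nonneg (x + y - 2 * (c - x - y))),
          mul_nonneg hx.le hy.le, mul_pos hx hy, sq_nonneg (x - y),
          mul_nonneg (mul_nonneg hx.le hy.le) hz.le]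
  nlinarith [mul_nonneg (sub_nonneg.2 hxy)
    (sub_nonneg.2 key), mul_pos hx hy]
end

section
/- Let A ≥ 0, 0 ≤ B < 1, 27A < (1-B)³, and let α₁ < α₂ be the two positive roots of k(u) = -2u³ + (1-B)u² - A in (0,1). Let h(u) = (1-u)(A + Bu + u²)/u. Then h is strictly decreasing on (0, α₁) and on (α₂, 1), strictly increasing on (α₁, α₂), h has a local minimum at α₁ and a local maximum at α₂, and there exists a unique u₀ ∈ (0, α₁) with h(u₀) = h(α₂). -/
/-- Shape of the prey isocline `h` when `k` has two positive roots
`α₁ < α₂` in `(0,1)`: `h` is strictly decreasing on `(0,α₁]` and `[α₂,1)`,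
strictly increasing on `[α₁,α₂]`, has a local minimum at `α₁`, a local
maximum at `α₂`, and there is a unique `u₀ ∈ (0,α₁)` with `h u₀ = h α₂`. -/
theorem stmt5 (A B : ℝ) (hA : 0 < A) (hB0 : 0 ≤ B) (hB1 : B < 1)
    (hdisc : 27 * A < (1 - B) ^ 3)
    (k h : ℝ → ℝ)
    (hk : ∀ u, k u = -2 * u ^ 3 + (1 - B) * u ^ 2 - A)
    (hh : ∀ u, h u = (1 - u) * (A + B * u + u ^ 2) / u)
    (α₁ α₂ : ℝ) (h1 : 0 < α₁) (h2 : α₁ < (1 - B) / 3) (h3 : (1 - B) / 3 < α₂)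
    (h4 : α₂ < 1) (hr1 : k α₁ = 0) (hr2 : k α₂ = 0) :
    StrictAntiOn h (Set.Ioc 0 α₁) ∧
    StrictMonoOn h (Set.Icc α₁ α₂) ∧
    StrictAntiOn h (Set.Ico α₂ 1) ∧
    IsLocalMinOn h (Set.Ioi (0 : ℝ)) α₁ ∧
    IsLocalMaxOn h (Set.Ioi (0 : ℝ)) α₂ ∧
    (∃! u₀ : ℝ, u₀ ∈ Set.Ioo 0 α₁ ∧ h u₀ = h α₂) := by
  have h12 : α₁ < α₂ := lt_trans h2 h3
  have hr1' : -2 * α₁ ^ 3 + (1 - B) * α₁ ^ 2 - A = 0 := by rw [← hk]; exact hr1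
  have hr2' : -2 * α₂ ^ 3 + (1 - B) * α₂ ^ 2 - A = 0 := by rw [← hk]; exact hr2
  -- sign lemmas for k
  have hq1α₂ : -2 * (α₂ ^ 2 + α₂ * α₁ + α₁ ^ 2) + (1 - B) * (α₂ + α₁) = 0 := by
    have key : (α₂ - α₁) * (-2 * (α₂ ^ 2 + α₂ * α₁ + α₁ ^ 2) + (1 - B) * (α₂ + α₁)) = 0 := by
      linear_combination hr2' - hr1'
    exact (mul_eq_zero.mp key).resolve_left (sub_ne_zero.mpr (ne_of_gt h12))
  have hq10 : 0 < -2 * α₁ ^ 2 + (1 - B) * α₁ := by nlinarith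
  have hq1pos : ∀ u, 0 < u → u < α₂ →
      0 < -2 * (u ^ 2 + u * α₁ + α₁ ^ 2) + (1 - B) * (u + α₁) := by
    intro u hu hu2
    have h2pos : (0:ℝ) < α₂ := lt_trans h1 h12
    nlinarith [mul_pos (mul_pos hu h2pos) (sub_pos.mpr hu2),
      mul_pos (sub_pos.mpr hu2) hq10, mul_pos hu h2pos]
  have S1 : ∀ u, 0 < u → u < α₁ → k u < 0 := by
    intro u hu hu1
    have hq := hq1pos u hu (lt_trans hu1 h12)
    have hfac : k u = (u - α₁) * (-2 * (u ^ 2 + u * α₁ + α₁ ^ 2) + (1 - B) * (u + α₁)) := by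
      rw [hk]; linear_combination hr1'
    rw [hfac]; exact mul_neg_of_neg_of_pos (sub_neg.mpr hu1) hq
  have S2 : ∀ u, α₁ < u → u < α₂ → 0 < k u := by
    intro u hu1 hu2
    have hq := hq1pos u (lt_trans h1 hu1) hu2
    have hfac : k u = (u - α₁) * (-2 * (u ^ 2 + u * α₁ + α₁ ^ 2) + (1 - B) * (u + α₁)) := by
      rw [hk]; linear_combination hr1'
    rw [hfac]; exact mul_pos (sub_pos.mpr hu1) hq
  have S3 : ∀ u, α₂ < u → k u < 0 := by
    intro u hu
    have hfac : k u = (u - α₂) * (-2 * (u ^ 2 + u * α₂ + α₂ ^ 2) + (1 - B) * (u + α₂)) := by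
      rw [hk]; linear_combination hr2'
    rw [hfac]
    have hqneg : -2 * (u ^ 2 + u * α₂ + α₂ ^ 2) + (1 - B) * (u + α₂) < 0 := by
      nlinarith [mul_pos (sub_pos.mpr (lt_trans h12 hu))
        (show (0:ℝ) < 2 * (u + α₂) - (1 - B) by nlinarith), hq1α₂]
    exact mul_neg_of_pos_of_neg (sub_pos.mpr hu) hqneg
  -- derivative of h
  have hderiv : ∀ u : ℝ, u ≠ 0 → HasDerivAt h (k u / u ^ 2) u := by
    intro u hu
    have hfun : h = fun x => (1 - x) * (A + B * x + x ^ 2) / x := funext hh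
    rw [hfun]
    have hd1 : HasDerivAt (fun x : ℝ => 1 - x) (-1) u := by
      simpa using (hasDerivAt_const u (1:ℝ)).fun_sub (hasDerivAt_id u)
    have hd2 : HasDerivAt (fun x : ℝ => A + B * x + x ^ 2) (B + 2 * u) u := by
      have ha : HasDerivAt (fun x : ℝ => A + B * x) B u := by
        simpa using (hasDerivAt_const u A).fun_add ((hasDerivAt_id u).const_mul B)
      simpa using ha.fun_add (hasDerivAt_pow 2 u)
    have hD := (hd1.fun_mul hd2).fun_div (hasDerivAt_id u) hu
    refine hD.congr_deriv ?_
    rw [hk]; simp only [id]; field_simp; ring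
  have hdiff : ∀ u : ℝ, u ≠ 0 → DifferentiableAt ℝ h u :=
    fun u hu => (hderiv u hu).differentiableAt
  -- the three monotonicity statements
  have key1 : StrictAntiOn h (Set.Ioc 0 α₁) := by
    apply strictAntiOn_of_deriv_neg (convex_Ioc 0 α₁)
    · exact fun u hu => (hdiff u (ne_of_gt hu.1)).continuousAt.continuousWithinAt
    · intro u hu
      rw [interior_Ioc] at hu
      rw [(hderiv u (ne_of_gt hu.1)).deriv]
      exact div_neg_of_neg_of_pos (S1 u hu.1 hu.2) (pow_pos hu.1 2)
  have key2 : StrictMonoOn h (Set.Icc α₁ α₂) := by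
    apply strictMonoOn_of_deriv_pos (convex_Icc α₁ α₂)
    · exact fun u hu => (hdiff u (ne_of_gt (lt_of_lt_of_le h1 hu.1))).continuousAt.continuousWithinAt
    · intro u hu
      rw [interior_Icc] at hu
      rw [(hderiv u (ne_of_gt (lt_trans h1 hu.1))).deriv]
      exact div_pos (S2 u hu.1 hu.2) (pow_pos (lt_trans h1 hu.1) 2)
  have key3 : StrictAntiOn h (Set.Ico α₂ 1) := by
    apply strictAntiOn_of_deriv_neg (convex_Ico α₂ 1)
    · exact fun u hu =>
        (hdiff u (ne_of_gt (lt_of_lt_of_le (lt_trans h1 h12) hu.1))).continuousAt.continuousWithinAt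
    · intro u hu
      rw [interior_Ico] at hu
      have hupos : (0:ℝ) < u := lt_trans (lt_trans h1 h12) hu.1
      rw [(hderiv u (ne_of_gt hupos)).deriv]
      exact div_neg_of_neg_of_pos (S3 u hu.1) (pow_pos hupos 2)
  refine ⟨key1, key2, key3, ?_, ?_, ?_⟩
  · -- local min at α₁
    have hnb : Set.Ioo (0:ℝ) α₂ ∈ nhds α₁ := Ioo_mem_nhds h1 h12
    have : ∀ᶠ x in nhdsWithin α₁ (Set.Ioi (0:ℝ)), h α₁ ≤ h x := by
      filter_upwards [mem_nhdsWithin_of_mem_nhds hnb] with x hx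
      rcases le_or_gt x α₁ with hle | hlt
      · rcases eq_or_lt_of_le hle with rfl | hlt'
        · exact le_refl _
        · exact le_of_lt (key1 ⟨hx.1, hle⟩ ⟨h1, le_refl _⟩ hlt')
      · exact le_of_lt (key2 ⟨le_refl _, le_of_lt h12⟩ ⟨le_of_lt hlt, le_of_lt hx.2⟩ hlt)
    exact this
  · -- local max at α₂
    have hnb : Set.Ioo α₁ (1:ℝ) ∈ nhds α₂ := Ioo_mem_nhds h12 h4
    have : ∀ᶠ x in nhdsWithin α₂ (Set.Ioi (0:ℝ)), h x ≤ h α₂ := by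
      filter_upwards [mem_nhdsWithin_of_mem_nhds hnb] with x hx
      rcases le_or_gt x α₂ with hle | hlt
      · exact key2.monotoneOn ⟨le_of_lt hx.1, hle⟩ ⟨le_of_lt h12, le_refl _⟩ hle
      · exact le_of_lt (key3 ⟨le_refl _, lt_trans hlt hx.2⟩ ⟨le_of_lt hlt, hx.2⟩ hlt)
    exact this
  · -- unique u₀
    have hval : h α₁ < h α₂ := key2 ⟨le_refl _, le_of_lt h12⟩ ⟨le_of_lt h12, le_refl _⟩ h12
    set M : ℝ := |h α₂| + A + 2 with hM
    have hMpos : 0 < M := by positivity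
    set ε : ℝ := min (α₁ / 2) (A / M) with hε
    have hεpos : 0 < ε := lt_min (by linarith) (by positivity)
    have hεα₁ : ε < α₁ := lt_of_le_of_lt (min_le_left _ _) (by linarith)
    have hε1 : ε < 1 := by
      have : α₁ < 1 := lt_trans h12 h4
      linarith
    have hεM : A / ε ≥ M := by
      have h1' : ε ≤ A / M := min_le_right _ _
      rw [ge_iff_le, le_div_iff₀ hεpos]
      calc M * ε ≤ M * (A / M) := by nlinarith
        _ = A := by field_simp
    have hbig : h α₂ < h ε := by
      have hlow : A / ε - A - 2 < h ε := by
        rw [hh]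
        rw [div_sub' (ne_of_gt hεpos), div_sub' (ne_of_gt hεpos),
          div_lt_div_iff₀ hεpos hεpos]
        nlinarith [mul_nonneg (mul_nonneg hB0 (mul_pos hεpos hεpos).le) (sub_pos.mpr hε1).le,
          mul_pos (mul_pos (mul_pos hεpos hεpos) hεpos) (sub_pos.mpr hε1), mul_pos hεpos hεpos]
      have : h α₂ ≤ |h α₂| := le_abs_self _
      linarith
    have hcont : ContinuousOn h (Set.Icc ε α₁) := fun u hu =>
      (hdiff u (ne_of_gt (lt_of_lt_of_le hεpos hu.1))).continuousAt.continuousWithinAt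
    have hmem : h α₂ ∈ Set.Ioo (h α₁) (h ε) := ⟨hval, hbig⟩
    obtain ⟨u₀, hu₀, hu₀eq⟩ := intermediate_value_Ioo' (le_of_lt hεα₁) hcont hmem
    refine ⟨u₀, ⟨⟨lt_trans hεpos hu₀.1, hu₀.2⟩, hu₀eq⟩, ?_⟩
    intro v ⟨hv, hveq⟩
    have hinj := key1.injOn
    exact hinj ⟨hv.1, le_of_lt hv.2⟩ ⟨lt_trans hεpos hu₀.1, le_of_lt hu₀.2⟩ (by rw [hveq, hu₀eq])
end

section
/- Let δ₁ > 0, c > 0, ω_c = c - δ₁/c, and p(λ) = -λ³ + ω_c λ² + δ₁λ + K with K > 0. Then p has exactly one positive real root, and p(0) = K > 0. Moreover, if K is small enough that p(λ₋) < 0 where λ₋ = (ω_c - √(ω_c² + 3δ₁))/3, then p has two distinct negative real roots and one positive real root. -/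
/-- Root structure of `p(λ) = -λ³ + ω_c λ² + δ₁λ + K` with `K > 0`:
`p` has exactly one positive real root and `p(0) = K > 0`; if moreover
`p(λ₋) < 0` at the negative critical point `λ₋`, then `p` has two distinct
negative real roots. -/
theorem stmt18 (δ₁ c K : ℝ) (hδ₁ : 0 < δ₁) (hc : 0 < c) (hK : 0 < K) :
    let ωc := c - δ₁ / c
    let p : ℝ → ℝ := fun lam => -lam ^ 3 + ωc * lam ^ 2 + δ₁ * lam + K
    let lamm := (ωc - Real.sqrt (ωc ^ 2 + 3 * δ₁)) / 3
    (∃! lam : ℝ, 0 < lam ∧ p lam = 0) ∧ p 0 = K ∧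
      (p lamm < 0 →
        ∃ a b : ℝ, a < b ∧ b < 0 ∧ p a = 0 ∧ p b = 0 ∧
          ∃ lam : ℝ, 0 < lam ∧ p lam = 0) := by
  intro ωc p lamm
  have hpfun : p = fun lam => -lam ^ 3 + ωc * lam ^ 2 + δ₁ * lam + K := rfl
  have hlammdef : lamm = (ωc - Real.sqrt (ωc ^ 2 + 3 * δ₁)) / 3 := rfl
  clear_value lamm p
  clear_value ωc
  have hcont : Continuous p := by rw [hpfun]; continuity
  set s := Real.sqrt (ωc ^ 2 + 3 * δ₁) with hsdef
  have hs2 : s ^ 2 = ωc ^ 2 + 3 * δ₁ := Real.sq_sqrt (by nlinarith)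
  have hsnn : 0 ≤ s := Real.sqrt_nonneg _
  have hss : |ωc| < s := by
    nlinarith [sq_abs ωc, abs_nonneg ωc]
  clear_value s
  set lamp := (ωc + s) / 3 with hlpdef
  clear_value lamp
  have hlamm : lamm = (ωc - s) / 3 := hlammdef
  have hlamm_neg : lamm < 0 := by
    rw [hlamm]; have := le_abs_self ωc; linarith
  have hlamp_pos : 0 < lamp := by
    rw [hlpdef]; have := neg_le_abs ωc; linarith
  have hml : lamm < lamp := by
    rw [hlamm, hlpdef]; have := abs_nonneg ωc; linarith
  have hderiv : ∀ x : ℝ, HasDerivAt p (-3 * (x - lamm) * (x - lamp)) x := by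
    intro x
    have h1 : HasDerivAt p (-(3 * x ^ 2) + ωc * (2 * x) + δ₁ * 1) x := by
      have := (((hasDerivAt_pow 3 x).neg.add ((hasDerivAt_pow 2 x).const_mul ωc)).add
        ((hasDerivAt_id x).const_mul δ₁)).add_const K
      rw [hpfun]
      simpa using this
    have heq : -(3 * x ^ 2) + ωc * (2 * x) + δ₁ * 1 = -3 * (x - lamm) * (x - lamp) := by
      rw [hlamm, hlpdef]; linear_combination (-1/3 : ℝ) * hs2
    rw [← heq]; exact h1
  have hderiveq : ∀ x : ℝ, deriv p x = -3 * (x - lamm) * (x - lamp) :=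
    fun x => (hderiv x).deriv
  have hmono : StrictMonoOn p (Set.Icc lamm lamp) := by
    apply strictMonoOn_of_deriv_pos (convex_Icc _ _) hcont.continuousOn
    intro x hx
    rw [interior_Icc] at hx
    rw [hderiveq]
    nlinarith [hx.1, hx.2]
  have hanti : StrictAntiOn p (Set.Ici lamp) := by
    apply strictAntiOn_of_deriv_neg (convex_Ici _) hcont.continuousOn
    intro x hx
    rw [interior_Ici] at hx
    have hx' : lamp < x := hx
    rw [hderiveq]
    nlinarith [hml.trans hx']
  have hp0 : p 0 = K := by rw [hpfun]; norm_num
  have hpos_on : ∀ x : ℝ, 0 < x → x ≤ lamp → 0 < p x := by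
    intro x hx hxle
    have := hmono (Set.mem_Icc.2 ⟨hlamm_neg.le, hlamp_pos.le⟩)
      (Set.mem_Icc.2 ⟨(hlamm_neg.trans hx).le, hxle⟩) hx
    rw [hp0] at this; linarith
  set M := 1 + |ωc| + δ₁ + K + lamp with hMdef
  have hM1 : 1 ≤ M := by have := abs_nonneg ωc; rw [hMdef]; linarith
  have hMlamp : lamp < M := by have := abs_nonneg ωc; rw [hMdef]; linarith
  have hpM : p M < 0 := by
    have habs : ωc ≤ |ωc| := le_abs_self ωc
    have hMge : 1 + ωc + δ₁ + K ≤ M := by rw [hMdef]; linarith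
    have hM0 : 0 < M := by linarith
    rw [hpfun]
    show -M ^ 3 + ωc * M ^ 2 + δ₁ * M + K < 0
    nlinarith [mul_le_mul_of_nonneg_left hMge (sq_nonneg M), sq_nonneg M,
      mul_le_mul_of_nonneg_left hM1 (le_of_lt hM0), mul_pos hM0 hM0]
  have hroot_pos : ∃ lam : ℝ, 0 < lam ∧ p lam = 0 := by
    have hplamp : 0 < p lamp := hpos_on lamp hlamp_pos le_rfl
    have h0mem : (0 : ℝ) ∈ Set.Icc (p M) (p lamp) := ⟨hpM.le, hplamp.le⟩
    obtain ⟨x, hxmem, hxval⟩ := intermediate_value_Icc' hMlamp.le hcont.continuousOn h0mem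
    exact ⟨x, hlamp_pos.trans_le hxmem.1, hxval⟩
  have huniq : ∃! lam : ℝ, 0 < lam ∧ p lam = 0 := by
    obtain ⟨x, hx, hxv⟩ := hroot_pos
    refine ⟨x, ⟨hx, hxv⟩, ?_⟩
    have key : ∀ y : ℝ, 0 < y → p y = 0 → lamp < y := by
      intro y hy hyv
      by_contra h
      push_neg at h
      exact absurd hyv (ne_of_gt (hpos_on y hy h))
    intro y ⟨hy, hyv⟩
    exact hanti.injOn (Set.mem_Ici.2 (key y hy hyv).le) (Set.mem_Ici.2 (key x hx hxv).le)
      (by rw [hyv, hxv])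
  refine ⟨huniq, hp0, ?_⟩
  intro hneg
  set m := lamm - (1 + |ωc| + δ₁ + K) with hmdef
  have hmlt : m < lamm := by have := abs_nonneg ωc; rw [hmdef]; linarith
  have hpm : 0 < p m := by
    have habs : -ωc ≤ |ωc| := neg_le_abs ωc
    have ht : 1 - ωc + δ₁ + K ≤ -m := by rw [hmdef]; linarith [hlamm_neg]
    have hm1 : 1 ≤ -m := by rw [hmdef]; have := abs_nonneg ωc; linarith [hlamm_neg]
    have hm0 : 0 < -m := by linarith
    rw [hpfun]
    show 0 < -m ^ 3 + ωc * m ^ 2 + δ₁ * m + K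
    nlinarith [mul_le_mul_of_nonneg_left ht (sq_nonneg m), sq_nonneg m,
      mul_le_mul_of_nonneg_left hm1 (le_of_lt hm0), mul_pos hm0 hm0]
  obtain ⟨a, hamem, haval⟩ := intermediate_value_Icc' hmlt.le hcont.continuousOn
    (Set.mem_Icc.2 ⟨hneg.le, hpm.le⟩ : (0:ℝ) ∈ Set.Icc (p lamm) (p m))
  have ha_lt : a < lamm := lt_of_le_of_ne hamem.2 (fun h => by rw [h] at haval; linarith)
  have h0' : (0:ℝ) ∈ Set.Icc (p lamm) (p 0) := Set.mem_Icc.2 ⟨hneg.le, by rw [hp0]; exact hK.le⟩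
  obtain ⟨b, hbmem, hbval⟩ := intermediate_value_Icc hlamm_neg.le hcont.continuousOn h0'
  have hb_gt : lamm < b := lt_of_le_of_ne hbmem.1 (fun h => by rw [← h] at hbval; linarith)
  have hb_lt : b < 0 := lt_of_le_of_ne hbmem.2 (fun h => by rw [h, hp0] at hbval; linarith)
  exact ⟨a, b, ha_lt.trans hb_gt, hb_lt, haval, hbval, hroot_pos⟩
end
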